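/- Let $d\geq 3$, $1\leq k\leq d$, $r_0>0$, $C=r_0^{d-k}-r_0^d$, and $u(r)=\int_{r_0}^r s(1+Cs^{-d})^{1/k}ds$. Then as $r\to\infty$, $u(r) = \frac{1}{2}r^2 + \mu(r_0) + O(r^{2-d})$, where $\mu(r_0) = -\frac{1}{2}r_0^2 + \int_{r_0}^{\infty} s\big((1+Cs^{-d})^{1/k}-1\big)\,ds$ (the integral being convergent since $d\geq 3$). -/

import Mathlib

open MeasureTheory

theorem stmt6 (d k : ℕ) (hd : 3 ≤ d) (hk1 : 1 ≤ k) (hk2 : k ≤ d) (r0 : ℝ) (hr0 : 0 < r0)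
    (C : ℝ) (hC : C = r0 ^ (d - k) - r0 ^ d)
    (u : ℝ → ℝ)
    (hu : ∀ r : ℝ, u r = ∫ s in r0..r, s * (1 + C * s ^ (-(d : ℝ))) ^ ((1 : ℝ) / k)) :
    MeasureTheory.IntegrableOn
        (fun s : ℝ => s * ((1 + C * s ^ (-(d : ℝ))) ^ ((1 : ℝ) / k) - 1)) (Set.Ioi r0) ∧
    ∃ K R1 : ℝ, 0 < K ∧ r0 < R1 ∧ ∀ r : ℝ, R1 ≤ r →
      |u r - (r ^ 2 / 2 +
          (-(r0 ^ 2) / 2 +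
            ∫ s in Set.Ioi r0, s * ((1 + C * s ^ (-(d : ℝ))) ^ ((1 : ℝ) / k) - 1)))|
        ≤ K * r ^ ((2 : ℝ) - d) := by
  set p : ℝ := (1 : ℝ) / k with hp
  have hk0 : (0 : ℝ) < k := by exact_mod_cast hk1
  have hp0 : 0 < p := by positivity
  have hp1 : p ≤ 1 := by
    rw [hp, div_le_one hk0]; exact_mod_cast hk1
  set g : ℝ → ℝ := fun s => s * ((1 + C * s ^ (-(d : ℝ))) ^ p - 1) with hg
  -- positivity of the base on [r0, ∞)
  have hpos : ∀ s : ℝ, r0 ≤ s → 0 < 1 + C * s ^ (-(d : ℝ)) := by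
    intro s hs
    have hs0 : (0 : ℝ) < s := lt_of_lt_of_le hr0 hs
    rcases le_or_gt 0 C with hC0 | hC0
    · have : 0 ≤ C * s ^ (-(d : ℝ)) := by positivity
      linarith
    · have h1 : s ^ (-(d : ℝ)) ≤ r0 ^ (-(d : ℝ)) :=
        Real.rpow_le_rpow_of_nonpos hr0 hs (neg_nonpos.mpr (Nat.cast_nonneg d))
      have h2 : C * r0 ^ (-(d : ℝ)) ≤ C * s ^ (-(d : ℝ)) := by
        nlinarith
      have h3 : 1 + C * r0 ^ (-(d : ℝ)) = r0 ^ (-(k : ℝ)) := by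
        rw [hC]
        have e1 : (r0 ^ (d - k) : ℝ) = r0 ^ (((d - k : ℕ) : ℝ)) := by
          rw [Real.rpow_natCast]
        have e2 : (r0 ^ d : ℝ) = r0 ^ ((d : ℝ)) := by rw [Real.rpow_natCast]
        have e3 : ((d - k : ℕ) : ℝ) = (d : ℝ) - (k : ℝ) := Nat.cast_sub hk2
        rw [e1, e2, e3, sub_mul, ← Real.rpow_add hr0, ← Real.rpow_add hr0]
        ring_nf
        rw [Real.rpow_zero]
        ring
      have h4 : (0 : ℝ) < r0 ^ (-(k : ℝ)) := Real.rpow_pos_of_pos hr0 _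
      linarith
  -- the key pointwise bound
  have hbound : ∀ s : ℝ, r0 ≤ s → |g s| ≤ |C| * s ^ ((1 : ℝ) - d) := by
    intro s hs
    have hs0 : (0 : ℝ) < s := lt_of_lt_of_le hr0 hs
    set x : ℝ := C * s ^ (-(d : ℝ)) with hx
    have hx1 : 0 < 1 + x := hpos s hs
    have key : |(1 + x) ^ p - 1| ≤ |x| := by
      rw [abs_le]
      constructor
      · rcases le_or_gt 0 x with h | h
        · have : (1 : ℝ) ≤ (1 + x) ^ p := Real.one_le_rpow (by linarith) hp0.le
          have := abs_nonneg x
          linarith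
        · have h1 : (1 + x) ^ (1 : ℝ) ≤ (1 + x) ^ p :=
            Real.rpow_le_rpow_of_exponent_ge hx1 (by linarith) hp1
          rw [Real.rpow_one] at h1
          rw [abs_of_neg h]
          linarith
      · rcases le_or_gt 0 x with h | h
        · have h1 : (1 + x) ^ p ≤ (1 + x) ^ (1 : ℝ) :=
            Real.rpow_le_rpow_of_exponent_le (by linarith) hp1
          rw [Real.rpow_one] at h1
          rw [abs_of_nonneg h]
          linarith
        · have h1 : (1 + x) ^ p ≤ 1 := Real.rpow_le_one hx1.le (by linarith) hp0.le
          have := abs_nonneg x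
          linarith
    have hxabs : |x| = |C| * s ^ (-(d : ℝ)) := by
      rw [hx, abs_mul, abs_of_pos (Real.rpow_pos_of_pos hs0 _)]
    have : |g s| = s * |(1 + x) ^ p - 1| := by
      rw [hg]; simp only [abs_mul, abs_of_pos hs0]; rw [hx]
    rw [this]
    calc s * |(1 + x) ^ p - 1| ≤ s * |x| := by
          exact mul_le_mul_of_nonneg_left key hs0.le
      _ = |C| * (s ^ (1 : ℝ) * s ^ (-(d : ℝ))) := by
          rw [hxabs, Real.rpow_one]; ring
      _ = |C| * s ^ ((1 : ℝ) - d) := by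
          rw [← Real.rpow_add hs0]; ring_nf
  -- continuity of g on Ici r0
  have hct : ContinuousOn g (Set.Ici r0) := by
    intro s hs
    have hs0 : (0 : ℝ) < s := lt_of_lt_of_le hr0 hs
    apply ContinuousAt.continuousWithinAt
    have h1 : ContinuousAt (fun t : ℝ => 1 + C * t ^ (-(d : ℝ))) s :=
      continuousAt_const.add (continuousAt_const.mul
        (Real.continuousAt_rpow_const s _ (Or.inl hs0.ne')))
    have h3 : ContinuousAt (fun t : ℝ => (1 + C * t ^ (-(d : ℝ))) ^ p) s :=
      h1.rpow_const (Or.inl (hpos s hs).ne')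
    exact continuousAt_id.mul (h3.sub continuousAt_const)
  have hd1 : ((1 : ℝ) - d) < -1 := by
    have : (3 : ℝ) ≤ d := by exact_mod_cast hd
    linarith
  -- integrability of g on Ioi r0 (and any Ioi c with c ≥ r0)
  have hintg : ∀ c : ℝ, r0 ≤ c → IntegrableOn g (Set.Ioi c) := by
    intro c hc
    have hc0 : (0 : ℝ) < c := lt_of_lt_of_le hr0 hc
    have hmaj : IntegrableOn (fun s : ℝ => |C| * s ^ ((1 : ℝ) - d)) (Set.Ioi c) :=
      (integrableOn_Ioi_rpow_of_lt hd1 hc0).const_mul _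
    apply Integrable.mono' hmaj
    · exact (hct.mono (fun y (hy : y ∈ Set.Ioi c) =>
        Set.mem_Ici.mpr (hc.trans hy.le))).aestronglyMeasurable measurableSet_Ioi
    · filter_upwards [ae_restrict_mem measurableSet_Ioi] with s hs
      exact (hbound s (hc.trans (le_of_lt hs)))
  refine ⟨hintg r0 le_rfl, |C| + 1, r0 + 1, by positivity, by linarith, ?_⟩
  intro r hr
  have hrr0 : r0 ≤ r := by linarith
  have hr0r : (0 : ℝ) < r := lt_of_lt_of_le hr0 hrr0
  -- split u r
  have hIoc : IntegrableOn g (Set.Ioc r0 r) :=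
    ((hct.mono (Set.Icc_subset_Ici_self)).integrableOn_compact isCompact_Icc).mono_set
      Set.Ioc_subset_Icc_self
  have hsplit : (∫ s in Set.Ioi r0, g s) = (∫ s in Set.Ioc r0 r, g s) + ∫ s in Set.Ioi r, g s := by
    rw [← setIntegral_union (Set.Ioc_disjoint_Ioi le_rfl) measurableSet_Ioi hIoc
      (hintg r hrr0), Set.Ioc_union_Ioi_eq_Ioi hrr0]
  -- compute u r
  have hueq : u r = (r ^ 2 - r0 ^ 2) / 2 + ∫ s in Set.Ioc r0 r, g s := by
    rw [hu r]
    have heq : (fun s : ℝ => s * (1 + C * s ^ (-(d : ℝ))) ^ p) = fun s => s + g s := by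
      funext s; rw [hg]; ring
    rw [heq]
    have hi1 : IntervalIntegrable (fun s : ℝ => s) volume r0 r :=
      (continuous_id).intervalIntegrable r0 r
    have hi2 : IntervalIntegrable g volume r0 r := by
      apply ContinuousOn.intervalIntegrable
      apply hct.mono
      rw [Set.uIcc_of_le hrr0]
      exact fun y hy => hy.1
    rw [intervalIntegral.integral_add hi1 hi2, integral_id,
      intervalIntegral.integral_of_le hrr0]
  -- the error term
  have hdiff : u r - (r ^ 2 / 2 + (-(r0 ^ 2) / 2 + ∫ s in Set.Ioi r0, g s))
      = -∫ s in Set.Ioi r, g s := by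
    rw [hueq, hsplit]; ring
  rw [hdiff, abs_neg]
  have htail : |∫ s in Set.Ioi r, g s| ≤ |C| * (r ^ ((2 : ℝ) - d) / ((d : ℝ) - 2)) := by
    have hb : ∀ᵐ s ∂(volume.restrict (Set.Ioi r)), ‖g s‖ ≤ |C| * s ^ ((1 : ℝ) - d) := by
      filter_upwards [ae_restrict_mem measurableSet_Ioi] with s hs
      exact hbound s (hrr0.trans (le_of_lt hs))
    have hmaj : IntegrableOn (fun s : ℝ => |C| * s ^ ((1 : ℝ) - d)) (Set.Ioi r) :=
      (integrableOn_Ioi_rpow_of_lt hd1 hr0r).const_mul _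
    calc |∫ s in Set.Ioi r, g s| ≤ ∫ s in Set.Ioi r, |C| * s ^ ((1 : ℝ) - d) :=
          norm_integral_le_of_norm_le hmaj hb
      _ = |C| * ∫ s in Set.Ioi r, s ^ ((1 : ℝ) - d) := integral_const_mul _ _
      _ = |C| * (r ^ ((2 : ℝ) - d) / ((d : ℝ) - 2)) := by
          rw [integral_Ioi_rpow_of_lt hd1 hr0r,
            show (1 : ℝ) - d + 1 = (2 : ℝ) - d by ring]
          have h3d : (3 : ℝ) ≤ d := by exact_mod_cast hd
          have hne : ((2 : ℝ) - d) ≠ 0 := by intro h; linarith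
          have hne' : ((d : ℝ) - 2) ≠ 0 := by intro h; linarith
          rw [show -r ^ ((2 : ℝ) - d) / ((2 : ℝ) - d)
              = r ^ ((2 : ℝ) - d) / ((d : ℝ) - 2) from by
            rw [div_eq_div_iff hne hne']; ring]
    
  have hdd : (1 : ℝ) ≤ (d : ℝ) - 2 := by
    have : (3 : ℝ) ≤ d := by exact_mod_cast hd
    linarith
  have hrp : (0 : ℝ) < r ^ ((2 : ℝ) - d) := Real.rpow_pos_of_pos hr0r _
  calc |∫ s in Set.Ioi r, g s| ≤ |C| * (r ^ ((2 : ℝ) - d) / ((d : ℝ) - 2)) := htail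
    _ ≤ (|C| + 1) * r ^ ((2 : ℝ) - d) := by
        rw [mul_div_assoc']
        rw [div_le_iff₀ (by linarith : (0 : ℝ) < (d : ℝ) - 2)]
        have h1 : |C| * r ^ ((2 : ℝ) - d) ≤ (|C| + 1) * r ^ ((2 : ℝ) - d) := by nlinarith [abs_nonneg C]
        nlinarith [abs_nonneg C, mul_nonneg (abs_nonneg C) hrp.le]
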